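/- Let D_n = (1/2)·Σ_{T ∈ 𝒯(n)} (S(T) − C(T)), summing over all binary tree shapes with n leaves. Then for odd n > 1, D_n = Σ_{1 ≤ k ≤ n/2} k·b_k·b_{n−k} + Σ_{1 ≤ k < n} D_k·b_{n−k}, and for even n, D_n = Σ_{1 ≤ k ≤ n/2} k·b_k·b_{n−k} + Σ_{1 ≤ k < n} D_k·b_{n−k} − (n/2)·C(b_{n/2}, 2) + D_{n/2}. -/

import Mathlib

/-- Full binary rooted trees with leaves carrying data of type `α`. -/
inductive BTree (α : Type) : Type
  | leaf (a : α) : BTree α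
  | node (l r : BTree α) : BTree α

namespace BTree

/-- Number of leaves below (the subtree rooted at) a node. -/
def leaves {α} : BTree α → ℕ
  | leaf _ => 1
  | node l r => leaves l + leaves r

/-- Sackin index: sum over internal nodes of the number of leaves below that node. -/
def sackin {α} : BTree α → ℕ
  | leaf _ => 0
  | node l r => (leaves l + leaves r) + sackin l + sackin r

/-- Colless index: sum over internal nodes of the absolute difference of leaf counts
of the two children. -/
def colless {α} : BTree α → ℕ
  | leaf _ => 0
  | node l r => ((leaves l : ℤ) - (leaves r : ℤ)).natAbs + colless l + colless r

/-- Sum over all leaves of their depth (number of edges from the root). -/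
def depthSum {α} : BTree α → ℕ
  | leaf _ => 0
  | node l r => (depthSum l + leaves l) + (depthSum r + leaves r)

/-- Sum of leaf counts `ℓ_T(u)` over all nodes `u` (including leaves, each counting 1). -/
def totalL {α} : BTree α → ℕ
  | leaf _ => 1
  | node l r => (leaves l + leaves r) + totalL l + totalL r

/-- Sum over internal nodes of the minimum of the leaf counts of the two children. -/
def minSum {α} : BTree α → ℕ
  | leaf _ => 0
  | node l r => min (leaves l) (leaves r) + minSum l + minSum r

/-- Number of edges strictly below a node (each node of the subtree other than
its root contributes the edge to its parent). -/
def edgesBelow {α} : BTree α → ℕ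
  | leaf _ => 0
  | node l r => 2 + edgesBelow l + edgesBelow r

/-- Number of internal (non-leaf) nodes. -/
def internals {α} : BTree α → ℕ
  | leaf _ => 0
  | node l r => 1 + internals l + internals r

/-- `Subtree s t` means the subtree `s` occurs in `t`; thus `Subtree (node v w) T`
expresses that `T` has an internal node whose two child subtrees are `v` and `w`. -/
inductive Subtree {α} : BTree α → BTree α → Prop
  | refl (t) : Subtree t t
  | left {s l r} : Subtree s l → Subtree s (node l r)
  | right {s l r} : Subtree s r → Subtree s (node l r)

/-- Generating relation of tree-shape isomorphism: swapping the two children of a node. -/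
inductive Rel {α} : BTree α → BTree α → Prop
  | swap (l r) : Rel (node l r) (node r l)
  | congrL {l l'} (r) : Rel l l' → Rel (node l r) (node l' r)
  | congrR (l) {r r'} : Rel r r' → Rel (node l r) (node l r')

/-- The list of leaf labels, left to right. -/
def leafList {α} : BTree α → List α
  | leaf a => [a]
  | node l r => leafList l ++ leafList r

end BTree

/-- Binary tree shapes: full binary rooted trees up to isomorphism (children unordered). -/
def Shape : Type := Quot (@BTree.Rel Unit)

noncomputable def Shape.leaves (q : Shape) : ℕ := BTree.leaves q.out
noncomputable def Shape.sackin (q : Shape) : ℕ := BTree.sackin q.out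
noncomputable def Shape.colless (q : Shape) : ℕ := BTree.colless q.out

/-- `bSh n` = number of binary tree shapes with `n` leaves. -/
noncomputable def bSh (n : ℕ) : ℕ := Set.ncard {q : Shape | q.leaves = n}

/-- `S_n`: total Sackin index over all tree shapes with `n` leaves. -/
noncomputable def Snum (n : ℕ) : ℕ := ∑ᶠ q ∈ {q : Shape | q.leaves = n}, Shape.sackin q

/-- `D_n = (1/2) Σ_{T ∈ 𝒯(n)} (S(T) - C(T))`. -/
noncomputable def Dnum (n : ℕ) : ℕ :=
  (∑ᶠ q ∈ {q : Shape | q.leaves = n}, (Shape.sackin q - Shape.colless q)) / 2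

/-- Phylogenetic trees as labelled full binary rooted trees up to isomorphism. -/
def PTree : Type := Quot (@BTree.Rel ℕ)

/-- A labelled tree is a phylogenetic tree on `n` taxa if its leaf labels are
exactly `{1, ..., n}`, each occurring once. -/
def BTree.isPhylo (n : ℕ) (t : BTree ℕ) : Prop :=
  (BTree.leafList t).Perm ((List.range n).map (· + 1))

/-- The set `𝒫(n)` of phylogenetic trees on `n` taxa. -/
noncomputable def PhyloSet (n : ℕ) : Set PTree := {q | BTree.isPhylo n q.out}

/-- `a_n = |𝒫(n)|`. -/
noncomputable def aP (n : ℕ) : ℕ := Set.ncard (PhyloSet n)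

/-- Total Sackin index over all phylogenetic trees on `n` taxa. -/
noncomputable def SpTotal (n : ℕ) : ℕ := ∑ᶠ q ∈ PhyloSet n, BTree.sackin (Quot.out q)

/-- All trees obtained from `t` by attaching a new leaf labelled `x` on each of the
`2·leaves t - 1` edges of `t` (including the open edge entering the root). -/
def BTree.attach (x : ℕ) : BTree ℕ → List (BTree ℕ)
  | .leaf a => [.node (.leaf a) (.leaf x)]
  | .node l r =>
      .node (.node l r) (.leaf x) ::
        ((BTree.attach x l).map (fun l' => .node l' r) ++
         (BTree.attach x r).map (fun r' => .node l r'))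

section StmtAux

open BTree Finset

attribute [local instance] Classical.propDecidable

abbrev TU := BTree Unit

lemma BTree.one_le_leaves {α} (t : BTree α) : 1 ≤ t.leaves := by
  induction t with
  | leaf a => simp [leaves]
  | node l r ihl ihr => simp only [leaves]; omega

lemma BTree.sackin_eq_colless_add {α} (t : BTree α) :
    t.sackin = t.colless + 2 * t.minSum := by
  induction t with
  | leaf a => simp [sackin, colless, minSum]
  | node l r ihl ihr =>
    simp only [sackin, colless, minSum]
    omega

lemma BTree.rel_leaves {α} {t u : BTree α} (h : Rel t u) : t.leaves = u.leaves := by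
  induction h with
  | swap l r => simp only [leaves]; omega
  | congrL r h ih => simp only [leaves, ih]
  | congrR l h ih => simp only [leaves, ih]

lemma BTree.rel_minSum {α} {t u : BTree α} (h : Rel t u) : t.minSum = u.minSum := by
  induction h with
  | swap l r => simp only [minSum]; omega
  | congrL r h ih => simp only [minSum, ih, BTree.rel_leaves h]
  | congrR l h ih => simp only [minSum, ih, BTree.rel_leaves h]

lemma eqvGen_invariant {α} {f : BTree α → ℕ} (hf : ∀ {a b : BTree α}, BTree.Rel a b → f a = f b)
    {t u : BTree α} (h : Relation.EqvGen BTree.Rel t u) : f t = f u := by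
  induction h with
  | rel x y h => exact hf h
  | refl x => rfl
  | symm x y h ih => exact ih.symm
  | trans x y z h1 h2 ih1 ih2 => exact ih1.trans ih2

lemma out_mk_eqv (t : TU) : Relation.EqvGen BTree.Rel (Quot.mk BTree.Rel t).out t :=
  Quot.eq.mp (Quot.out_eq _)

lemma leaves_mk (t : TU) : Shape.leaves (Quot.mk BTree.Rel t) = t.leaves :=
  eqvGen_invariant (fun h => BTree.rel_leaves h) (out_mk_eqv t)

/-- minSum on shapes. -/
noncomputable def mS (q : Shape) : ℕ := BTree.minSum q.out

lemma mS_mk (t : TU) : mS (Quot.mk BTree.Rel t) = t.minSum :=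
  eqvGen_invariant (fun h => BTree.rel_minSum h) (out_mk_eqv t)

/-! ### the unordered-equality relation -/

def eqv : TU → TU → Prop
  | .leaf _, .leaf _ => True
  | .node l r, .node l' r' => (eqv l l' ∧ eqv r r') ∨ (eqv l r' ∧ eqv r l')
  | _, _ => False

lemma eqv_refl (t : TU) : eqv t t := by
  induction t with
  | leaf a => simp [eqv]
  | node l r ihl ihr => exact Or.inl ⟨ihl, ihr⟩

lemma eqv_symm : ∀ (t u : TU), eqv t u → eqv u t := by
  intro t
  induction t with
  | leaf a => intro u h; cases u <;> simp_all [eqv]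
  | node l r ihl ihr =>
    intro u h
    cases u with
    | leaf b => simp [eqv] at h
    | node u1 u2 =>
      simp only [eqv] at h ⊢
      rcases h with ⟨h1, h2⟩ | ⟨h1, h2⟩
      · exact Or.inl ⟨ihl _ h1, ihr _ h2⟩
      · exact Or.inr ⟨ihr _ h2, ihl _ h1⟩

lemma eqv_trans : ∀ (t u v : TU), eqv t u → eqv u v → eqv t v := by
  intro t
  induction t with
  | leaf a =>
    intro u v h1 h2
    cases u <;> cases v <;> simp_all [eqv]
  | node l r ihl ihr =>
    intro u v h1 h2
    cases u with
    | leaf b => simp [eqv] at h1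
    | node u1 u2 =>
      cases v with
      | leaf c => simp [eqv] at h2
      | node v1 v2 =>
        simp only [eqv] at h1 h2 ⊢
        rcases h1 with ⟨h1a, h1b⟩ | ⟨h1a, h1b⟩ <;>
          rcases h2 with ⟨h2a, h2b⟩ | ⟨h2a, h2b⟩
        · exact Or.inl ⟨ihl _ _ h1a h2a, ihr _ _ h1b h2b⟩
        · exact Or.inr ⟨ihl _ _ h1a h2a, ihr _ _ h1b h2b⟩
        · exact Or.inr ⟨ihl _ _ h1a h2b, ihr _ _ h1b h2a⟩
        · exact Or.inl ⟨ihl _ _ h1a h2b, ihr _ _ h1b h2a⟩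

lemma rel_eqv {t u : TU} (h : BTree.Rel t u) : eqv t u := by
  induction h with
  | swap l r => exact Or.inr ⟨eqv_refl l, eqv_refl r⟩
  | congrL r h ih => exact Or.inl ⟨ih, eqv_refl r⟩
  | congrR l h ih => exact Or.inl ⟨eqv_refl l, ih⟩

lemma eqvGen_node_left {l l' r : TU} (h : Relation.EqvGen BTree.Rel l l') :
    Relation.EqvGen BTree.Rel (BTree.node l r) (BTree.node l' r) := by
  induction h with
  | rel x y h => exact .rel _ _ (BTree.Rel.congrL r h)
  | refl x => exact .refl _
  | symm x y h ih => exact .symm _ _ ih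
  | trans x y z h1 h2 ih1 ih2 => exact .trans _ _ _ ih1 ih2

lemma eqvGen_node_right {l r r' : TU} (h : Relation.EqvGen BTree.Rel r r') :
    Relation.EqvGen BTree.Rel (BTree.node l r) (BTree.node l r') := by
  induction h with
  | rel x y h => exact .rel _ _ (BTree.Rel.congrR l h)
  | refl x => exact .refl _
  | symm x y h ih => exact .symm _ _ ih
  | trans x y z h1 h2 ih1 ih2 => exact .trans _ _ _ ih1 ih2

lemma eqv_eqvGen : ∀ (t u : TU), eqv t u → Relation.EqvGen BTree.Rel t u := by
  intro t
  induction t with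
  | leaf a =>
    intro u h
    cases u with
    | leaf b => cases a; cases b; exact .refl _
    | node _ _ => simp [eqv] at h
  | node l r ihl ihr =>
    intro u h
    cases u with
    | leaf b => simp [eqv] at h
    | node u1 u2 =>
      simp only [eqv] at h
      rcases h with ⟨h1, h2⟩ | ⟨h1, h2⟩
      · exact .trans _ _ _ (eqvGen_node_left (ihl _ h1)) (eqvGen_node_right (ihr _ h2))
      · exact .trans _ _ _
          (.trans _ _ _ (eqvGen_node_left (ihl _ h1)) (eqvGen_node_right (ihr _ h2)))
          (.rel _ _ (BTree.Rel.swap u2 u1))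

lemma eqvGen_eqv {t u : TU} (h : Relation.EqvGen BTree.Rel t u) : eqv t u := by
  induction h with
  | rel x y h => exact rel_eqv h
  | refl x => exact eqv_refl x
  | symm x y h ih => exact eqv_symm _ _ ih
  | trans x y z h1 h2 ih1 ih2 => exact eqv_trans _ _ _ ih1 ih2

lemma mk_node_eq_iff {a b c d : TU} :
    Quot.mk BTree.Rel (BTree.node a b) = Quot.mk BTree.Rel (BTree.node c d) ↔
      ((Quot.mk BTree.Rel a = Quot.mk BTree.Rel c ∧ Quot.mk BTree.Rel b = Quot.mk BTree.Rel d) ∨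
       (Quot.mk BTree.Rel a = Quot.mk BTree.Rel d ∧ Quot.mk BTree.Rel b = Quot.mk BTree.Rel c)) := by
  simp only [Quot.eq]
  constructor
  · intro h
    have h' := eqvGen_eqv h
    simp only [eqv] at h'
    rcases h' with ⟨h1, h2⟩ | ⟨h1, h2⟩
    · exact Or.inl ⟨eqv_eqvGen _ _ h1, eqv_eqvGen _ _ h2⟩
    · exact Or.inr ⟨eqv_eqvGen _ _ h1, eqv_eqvGen _ _ h2⟩
  · intro h
    apply eqv_eqvGen
    simp only [eqv]
    rcases h with ⟨h1, h2⟩ | ⟨h1, h2⟩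
    · exact Or.inl ⟨eqvGen_eqv h1, eqvGen_eqv h2⟩
    · exact Or.inr ⟨eqvGen_eqv h1, eqvGen_eqv h2⟩

/-! ### the node operation on shapes -/

def nodeQ : Shape → Shape → Shape :=
  Quot.lift
    (fun l => Quot.lift (fun r => Quot.mk BTree.Rel (BTree.node l r))
      (fun _ _ h => Quot.sound (BTree.Rel.congrR l h)))
    (fun _ _ h => funext fun q =>
      Quot.inductionOn q fun r => Quot.sound (BTree.Rel.congrL r h))

lemma nodeQ_mk (l r : TU) :
    nodeQ (Quot.mk BTree.Rel l) (Quot.mk BTree.Rel r) = Quot.mk BTree.Rel (BTree.node l r) := rfl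

lemma nodeQ_eq_iff {a b c d : Shape} :
    nodeQ a b = nodeQ c d ↔ ((a = c ∧ b = d) ∨ (a = d ∧ b = c)) := by
  induction a using Quot.inductionOn with | _ a =>
  induction b using Quot.inductionOn with | _ b =>
  induction c using Quot.inductionOn with | _ c =>
  induction d using Quot.inductionOn with | _ d =>
  rw [nodeQ_mk, nodeQ_mk]
  exact mk_node_eq_iff

lemma leaves_nodeQ (a b : Shape) : (nodeQ a b).leaves = a.leaves + b.leaves := by
  induction a using Quot.inductionOn with | _ a =>
  induction b using Quot.inductionOn with | _ b =>
  rw [nodeQ_mk, leaves_mk, leaves_mk, leaves_mk]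
  rfl

lemma mS_nodeQ (a b : Shape) : mS (nodeQ a b) = min a.leaves b.leaves + mS a + mS b := by
  induction a using Quot.inductionOn with | _ a =>
  induction b using Quot.inductionOn with | _ b =>
  rw [nodeQ_mk, mS_mk, mS_mk, mS_mk, leaves_mk, leaves_mk]
  rfl

/-! ### finiteness -/

lemma finite_tree_le (n : ℕ) : {t : TU | t.leaves ≤ n}.Finite := by
  induction n with
  | zero =>
    convert Set.finite_empty
    ext t
    simpa using fun h => absurd h (by have := BTree.one_le_leaves t; omega)
  | succ n ih =>
    apply Set.Finite.subset
      ((Set.finite_singleton (BTree.leaf ())).union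
        ((ih.prod ih).image (fun p => BTree.node p.1 p.2)))
    intro t ht
    simp only [Set.mem_setOf_eq] at ht
    cases t with
    | leaf a => left; cases a; rfl
    | node l r =>
      right
      refine ⟨(l, r), ⟨?_, ?_⟩, rfl⟩
      · have := BTree.one_le_leaves r
        simp only [Set.mem_setOf_eq]
        simp only [BTree.leaves] at ht
        omega
      · have := BTree.one_le_leaves l
        simp only [Set.mem_setOf_eq]
        simp only [BTree.leaves] at ht
        omega

lemma finite_tree (n : ℕ) : {t : TU | t.leaves = n}.Finite :=
  (finite_tree_le n).subset (fun _ ht => le_of_eq ht)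

lemma finShape (n : ℕ) : {q : Shape | q.leaves = n}.Finite := by
  apply Set.Finite.subset ((finite_tree n).image (Quot.mk BTree.Rel))
  intro q hq
  exact ⟨q.out, hq, Quot.out_eq q⟩

noncomputable def Bfin (n : ℕ) : Finset Shape := (finShape n).toFinset

lemma mem_Bfin {q : Shape} {n : ℕ} : q ∈ Bfin n ↔ q.leaves = n := by
  simp [Bfin, (finShape n).mem_toFinset]

lemma bSh_eq (n : ℕ) : bSh n = (Bfin n).card := by
  rw [bSh, Set.ncard_eq_toFinset_card _ (finShape n)]
  rfl

lemma Dnum_eq (n : ℕ) : Dnum n = ∑ q ∈ Bfin n, mS q := by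
  have h1 : ∀ q : Shape, Shape.sackin q - Shape.colless q = 2 * mS q := by
    intro q
    have := BTree.sackin_eq_colless_add q.out
    simp only [Shape.sackin, Shape.colless, mS]
    omega
  rw [Dnum, finsum_mem_eq_finite_toFinset_sum _ (finShape n)]
  have : ∀ q ∈ (finShape n).toFinset, Shape.sackin q - Shape.colless q = 2 * mS q :=
    fun q _ => h1 q
  rw [Finset.sum_congr rfl this, ← Finset.mul_sum]
  simpa [Bfin] using Nat.mul_div_cancel_left (∑ q ∈ (finShape n).toFinset, mS q) two_pos

end StmtAux
section StmtAux2

open BTree Finset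

attribute [local instance] Classical.propDecidable

/-! ### the pair decomposition -/

noncomputable def Pfin (n : ℕ) : Finset (Shape × Shape) :=
  (Finset.Ico 1 n).biUnion (fun k => Bfin k ×ˢ Bfin (n - k))

lemma Pfin_disj (n : ℕ) : Set.PairwiseDisjoint ((Finset.Ico 1 n : Finset ℕ) : Set ℕ)
    (fun k => Bfin k ×ˢ Bfin (n - k)) := by
  intro k _ k' _ hne
  simp only [Function.onFun]
  rw [Finset.disjoint_left]
  rintro ⟨a, b⟩ h h'
  simp only [Finset.mem_product, mem_Bfin] at h h'
  exact hne (h.1.symm.trans h'.1)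

lemma sum_Pfin (n : ℕ) :
    ∑ p ∈ Pfin n, mS (nodeQ p.1 p.2) =
      ∑ k ∈ Finset.Ico 1 n,
        (min k (n - k) * (Bfin k).card * (Bfin (n - k)).card
          + (∑ a ∈ Bfin k, mS a) * (Bfin (n - k)).card
          + (Bfin k).card * ∑ b ∈ Bfin (n - k), mS b) := by
  rw [Pfin, Finset.sum_biUnion (Pfin_disj n)]
  apply Finset.sum_congr rfl
  intro k _
  rw [Finset.sum_product]
  have key : ∀ a ∈ Bfin k, ∀ b ∈ Bfin (n - k),
      mS (nodeQ a b) = min k (n - k) + mS a + mS b := by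
    intro a ha b hb
    rw [mS_nodeQ, mem_Bfin.mp ha, mem_Bfin.mp hb]
  rw [Finset.sum_congr rfl (fun a ha => Finset.sum_congr rfl (fun b hb => key a ha b hb))]
  simp only [Finset.sum_add_distrib, Finset.sum_const, smul_eq_mul, ← Finset.sum_mul,
    ← Finset.mul_sum]
  ring

lemma out_node {n : ℕ} {q : Shape} (hq : q.leaves = n) (hn : 2 ≤ n) :
    ∃ l r : BTree Unit, q.out = BTree.node l r := by
  cases h : q.out with
  | leaf a =>
    exfalso
    have : q.leaves = 1 := by rw [Shape.leaves, h]; rfl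
    omega
  | node l r => exact ⟨l, r, rfl⟩

lemma q_eq_nodeQ {q : Shape} {l r : BTree Unit} (h : q.out = BTree.node l r) :
    q = nodeQ (Quot.mk BTree.Rel l) (Quot.mk BTree.Rel r) := by
  rw [nodeQ_mk, ← h]
  exact (Quot.out_eq q).symm

lemma leaves_split {n : ℕ} {q : Shape} (hq : q.leaves = n) {l r : BTree Unit}
    (h : q.out = BTree.node l r) : l.leaves + r.leaves = n := by
  have : Shape.leaves q = n := hq
  rw [Shape.leaves, h] at this
  simpa [BTree.leaves] using this

lemma pair_mem_Pfin {n : ℕ} {q : Shape} (hq : q.leaves = n) {l r : BTree Unit}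
    (h : q.out = BTree.node l r) :
    ((Quot.mk BTree.Rel l, Quot.mk BTree.Rel r) : Shape × Shape) ∈ Pfin n := by
  have hl := BTree.one_le_leaves l
  have hr := BTree.one_le_leaves r
  have hsum := leaves_split hq h
  exact Finset.mem_biUnion.mpr ⟨l.leaves, Finset.mem_Ico.mpr ⟨hl, by omega⟩,
    Finset.mem_product.mpr ⟨mem_Bfin.mpr (leaves_mk l), mem_Bfin.mpr ((leaves_mk r).trans (by omega))⟩⟩

lemma image_Pfin {n : ℕ} (hn : 2 ≤ n) :
    (Pfin n).image (fun p => nodeQ p.1 p.2) = Bfin n := by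
  apply Finset.ext
  intro q
  simp only [Finset.mem_image, mem_Bfin]
  constructor
  · rintro ⟨⟨a, b⟩, hp, rfl⟩
    simp only [Pfin, Finset.mem_biUnion, Finset.mem_Ico, Finset.mem_product, mem_Bfin] at hp
    obtain ⟨k, ⟨hk1, hk2⟩, ha, hb⟩ := hp
    rw [leaves_nodeQ, ha, hb]
    omega
  · intro hq
    obtain ⟨l, r, hlr⟩ := out_node hq hn
    exact ⟨(Quot.mk BTree.Rel l, Quot.mk BTree.Rel r), pair_mem_Pfin hq hlr,
      (q_eq_nodeQ hlr).symm⟩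

lemma fiber_eq {n : ℕ} {q : Shape} (hq : q.leaves = n) {l r : BTree Unit}
    (h : q.out = BTree.node l r) :
    (Pfin n).filter (fun p => nodeQ p.1 p.2 = q) =
      {((Quot.mk BTree.Rel l, Quot.mk BTree.Rel r) : Shape × Shape),
        ((Quot.mk BTree.Rel r, Quot.mk BTree.Rel l) : Shape × Shape)} := by
  have hq' := q_eq_nodeQ h
  apply Finset.ext
  rintro ⟨c, d⟩
  simp only [Finset.mem_filter, Finset.mem_insert, Finset.mem_singleton, Prod.mk.injEq]
  constructor
  · rintro ⟨_, hcd⟩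
    have hcd := nodeQ_eq_iff.mp (hcd.trans hq')
    rcases hcd with ⟨rfl, rfl⟩ | ⟨rfl, rfl⟩
    · exact Or.inl rfl
    · exact Or.inr rfl
  · rintro (⟨rfl, rfl⟩ | ⟨rfl, rfl⟩)
    · exact ⟨pair_mem_Pfin hq h, hq'.symm⟩
    · constructor
      · -- symmetric membership
        have hl := BTree.one_le_leaves l
        have hr := BTree.one_le_leaves r
        have hsum := leaves_split hq h
        exact Finset.mem_biUnion.mpr ⟨r.leaves, Finset.mem_Ico.mpr ⟨hr, by omega⟩,
          Finset.mem_product.mpr ⟨mem_Bfin.mpr (leaves_mk r),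
            mem_Bfin.mpr ((leaves_mk l).trans (by omega))⟩⟩
      · exact (nodeQ_eq_iff.mpr (Or.inr ⟨rfl, rfl⟩)).trans hq'.symm

/-- The diagonal shapes. -/
noncomputable def Dfin (n : ℕ) : Finset Shape := (Bfin (n / 2)).image (fun a => nodeQ a a)

lemma mem_Dfin_iff {n : ℕ} {q : Shape} (hq : q.leaves = n) {l r : BTree Unit}
    (h : q.out = BTree.node l r) :
    q ∈ Dfin n ↔ Quot.mk BTree.Rel l = Quot.mk BTree.Rel r := by
  have hq' := q_eq_nodeQ h
  constructor
  · intro hd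
    simp only [Dfin, Finset.mem_image] at hd
    obtain ⟨a, _, ha⟩ := hd
    rcases nodeQ_eq_iff.mp (ha.trans hq') with ⟨h1, h2⟩ | ⟨h1, h2⟩
    · exact h1.symm.trans h2
    · exact h2.symm.trans h1
  · intro he
    simp only [Dfin, Finset.mem_image]
    refine ⟨Quot.mk BTree.Rel l, ?_, by rw [hq', he]⟩
    have hsum := leaves_split hq h
    have : l.leaves = r.leaves := by
      have := leaves_mk l
      have := leaves_mk r
      rw [← leaves_mk l, ← leaves_mk r, he]
    exact mem_Bfin.mpr ((leaves_mk l).trans (by omega))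

lemma fiber_card {n : ℕ} (hn : 2 ≤ n) {q : Shape} (hq : q ∈ Bfin n) :
    ((Pfin n).filter (fun p => nodeQ p.1 p.2 = q)).card =
      if q ∈ Dfin n then 1 else 2 := by
  have hq' : q.leaves = n := mem_Bfin.mp hq
  obtain ⟨l, r, hlr⟩ := out_node hq' hn
  rw [fiber_eq hq' hlr]
  by_cases he : Quot.mk BTree.Rel l = Quot.mk BTree.Rel r
  · rw [if_pos ((mem_Dfin_iff hq' hlr).mpr he), he]
    simp
  · rw [if_neg (fun hd => he ((mem_Dfin_iff hq' hlr).mp hd))]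
    exact Finset.card_pair (by simp [Prod.ext_iff]; tauto)

lemma Dfin_subset {n : ℕ} (hn : Even n) : Dfin n ⊆ Bfin n := by
  intro q hq
  simp only [Dfin, Finset.mem_image] at hq
  obtain ⟨a, ha, rfl⟩ := hq
  obtain ⟨m, rfl⟩ := hn
  rw [mem_Bfin, leaves_nodeQ, mem_Bfin.mp ha]
  omega

lemma Dfin_empty_inter {n : ℕ} (hn : ¬ Even n) (q : Shape) (hq : q ∈ Bfin n) : q ∉ Dfin n := by
  intro hd
  simp only [Dfin, Finset.mem_image] at hd
  obtain ⟨a, ha, rfl⟩ := hd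
  have h1 := mem_Bfin.mp hq
  rw [leaves_nodeQ, mem_Bfin.mp ha] at h1
  exact hn ⟨n / 2, by omega⟩

lemma sum_Dfin (n : ℕ) :
    ∑ q ∈ Dfin n, mS q = ∑ a ∈ Bfin (n / 2), (n / 2 + 2 * mS a) := by
  rw [Dfin, Finset.sum_image]
  · apply Finset.sum_congr rfl
    intro a ha
    rw [mS_nodeQ, mem_Bfin.mp ha, Nat.min_self]
    omega
  · intro a _ b _ hab
    rcases nodeQ_eq_iff.mp hab with ⟨h, _⟩ | ⟨h, _⟩ <;> exact h

/-- The master counting identity. -/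
lemma master (n : ℕ) (hn : 2 ≤ n) :
    ∑ p ∈ Pfin n, mS (nodeQ p.1 p.2)
      + (if Even n then ∑ a ∈ Bfin (n / 2), (n / 2 + 2 * mS a) else 0)
      = 2 * ∑ q ∈ Bfin n, mS q := by
  have hcomp : ∑ p ∈ Pfin n, mS (nodeQ p.1 p.2) =
      ∑ q ∈ (Pfin n).image (fun p => nodeQ p.1 p.2),
        ((Pfin n).filter (fun p => nodeQ p.1 p.2 = q)).card • mS q :=
    Finset.sum_comp (s := Pfin n) mS (fun p : Shape × Shape => nodeQ p.1 p.2)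
  rw [hcomp, image_Pfin hn]
  have hfib : ∀ q ∈ Bfin n,
      ((Pfin n).filter (fun p => nodeQ p.1 p.2 = q)).card • mS q
        = (if q ∈ Dfin n then 1 else 2) * mS q := by
    intro q hq
    rw [fiber_card hn hq, smul_eq_mul]
  rw [Finset.sum_congr rfl hfib]
  by_cases hev : Even n
  · rw [if_pos hev, ← sum_Dfin n, ← Finset.sum_sdiff (Dfin_subset hev),
      ← Finset.sum_sdiff (Dfin_subset hev)]
    have h1 : ∀ q ∈ Bfin n \ Dfin n, (if q ∈ Dfin n then 1 else 2) * mS q = 2 * mS q := by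
      intro q hq
      rw [if_neg (Finset.mem_sdiff.mp hq).2]
    have h2 : ∀ q ∈ Dfin n, (if q ∈ Dfin n then 1 else 2) * mS q = mS q := by
      intro q hq
      rw [if_pos hq, one_mul]
    rw [Finset.sum_congr rfl h1, Finset.sum_congr rfl h2, ← Finset.mul_sum]
    ring
  · rw [if_neg hev, add_zero, Finset.mul_sum]
    apply Finset.sum_congr rfl
    intro q hq
    rw [if_neg (Dfin_empty_inter hev q hq)]

end StmtAux2
section StmtAux3

open BTree Finset

attribute [local instance] Classical.propDecidable

lemma sum_Ico_reflect' {M : Type*} [AddCommMonoid M] (f : ℕ → M) (n : ℕ) :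
    ∑ k ∈ Finset.Ico 1 n, f k = ∑ k ∈ Finset.Ico 1 n, f (n - k) := by
  refine Finset.sum_nbij' (i := fun k => n - k) (j := fun k => n - k) ?_ ?_ ?_ ?_ ?_
  · intro a ha; simp only [Finset.mem_Ico] at *; omega
  · intro a ha; simp only [Finset.mem_Ico] at *; omega
  · intro a ha; simp only [Finset.mem_Ico] at ha; omega
  · intro a ha; simp only [Finset.mem_Ico] at ha; omega
  · intro a ha
    simp only [Finset.mem_Ico] at ha
    have h : n - (n - a) = a := by omega
    rw [h]

lemma combined (n : ℕ) (hn : 2 ≤ n) :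
    (∑ k ∈ Finset.Ico 1 n, min k (n - k) * (Bfin k).card * (Bfin (n - k)).card)
    + (∑ k ∈ Finset.Ico 1 n, Dnum k * (Bfin (n - k)).card)
    + (∑ k ∈ Finset.Ico 1 n, Dnum k * (Bfin (n - k)).card)
    + (if Even n then n / 2 * (Bfin (n / 2)).card + 2 * Dnum (n / 2) else 0)
    = 2 * Dnum n := by
  have h0 := master n hn
  rw [sum_Pfin n, ← Dnum_eq n] at h0
  have hdiag : (∑ a ∈ Bfin (n / 2), (n / 2 + 2 * mS a))
      = n / 2 * (Bfin (n / 2)).card + 2 * Dnum (n / 2) := by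
    rw [Finset.sum_add_distrib, Finset.sum_const, smul_eq_mul, ← Finset.mul_sum, Dnum_eq]
    ring
  rw [hdiag] at h0
  rw [Finset.sum_add_distrib, Finset.sum_add_distrib] at h0
  have hmid : ∑ k ∈ Finset.Ico 1 n, (∑ a ∈ Bfin k, mS a) * (Bfin (n - k)).card
      = ∑ k ∈ Finset.Ico 1 n, Dnum k * (Bfin (n - k)).card := by
    apply Finset.sum_congr rfl
    intro k _
    rw [Dnum_eq]
  have hthird : ∑ k ∈ Finset.Ico 1 n, (Bfin k).card * (∑ b ∈ Bfin (n - k), mS b)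
      = ∑ k ∈ Finset.Ico 1 n, Dnum k * (Bfin (n - k)).card := by
    rw [sum_Ico_reflect' (fun k => (Bfin k).card * (∑ b ∈ Bfin (n - k), mS b)) n]
    apply Finset.sum_congr rfl
    intro k hk
    simp only [Finset.mem_Ico] at hk
    have h : n - (n - k) = k := by omega
    rw [h, Dnum_eq]
    ring
  rw [hmid, hthird] at h0
  omega

lemma minsplit (n : ℕ) (hn : 2 ≤ n) :
    (∑ k ∈ Finset.Ico 1 n, min k (n - k) * (Bfin k).card * (Bfin (n - k)).card)
      + (if Even n then n / 2 * (Bfin (n / 2)).card * (Bfin (n / 2)).card else 0)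
    = 2 * ∑ k ∈ (Finset.range (n + 1)).filter (fun k => 1 ≤ k ∧ 2 * k ≤ n),
        k * (Bfin k).card * (Bfin (n - k)).card := by
  have hF : (Finset.range (n + 1)).filter (fun k => 1 ≤ k ∧ 2 * k ≤ n)
      = (Finset.Ico 1 n).filter (fun k => 2 * k ≤ n) := by
    ext k
    simp only [Finset.mem_filter, Finset.mem_range, Finset.mem_Ico]
    omega
  rw [hF, ← Finset.sum_filter_add_sum_filter_not (Finset.Ico 1 n) (fun k => 2 * k ≤ n)
    (fun k => min k (n - k) * (Bfin k).card * (Bfin (n - k)).card)]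
  have e1 : ∑ k ∈ (Finset.Ico 1 n).filter (fun k => 2 * k ≤ n),
      min k (n - k) * (Bfin k).card * (Bfin (n - k)).card
      = ∑ k ∈ (Finset.Ico 1 n).filter (fun k => 2 * k ≤ n),
        k * (Bfin k).card * (Bfin (n - k)).card := by
    apply Finset.sum_congr rfl
    intro k hk
    simp only [Finset.mem_filter, Finset.mem_Ico] at hk
    rw [min_eq_left (by omega : k ≤ n - k)]
  have e2 : ∑ k ∈ (Finset.Ico 1 n).filter (fun k => ¬ 2 * k ≤ n),
      min k (n - k) * (Bfin k).card * (Bfin (n - k)).card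
      = ∑ k ∈ (Finset.Ico 1 n).filter (fun k => 2 * k < n),
        k * (Bfin k).card * (Bfin (n - k)).card := by
    refine Finset.sum_nbij' (i := fun k => n - k) (j := fun k => n - k) ?_ ?_ ?_ ?_ ?_
    · intro a ha; simp only [Finset.mem_filter, Finset.mem_Ico] at *; omega
    · intro a ha; simp only [Finset.mem_filter, Finset.mem_Ico] at *; omega
    · intro a ha; simp only [Finset.mem_filter, Finset.mem_Ico] at ha; omega
    · intro a ha; simp only [Finset.mem_filter, Finset.mem_Ico] at ha; omega
    · intro a ha
      simp only [Finset.mem_filter, Finset.mem_Ico] at ha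
      have h1 : n - (n - a) = a := by omega
      have h2 : min a (n - a) = n - a := by omega
      rw [h1, h2]
      ring
  have e3 : ∑ k ∈ (Finset.Ico 1 n).filter (fun k => 2 * k < n),
      k * (Bfin k).card * (Bfin (n - k)).card
      + (if Even n then n / 2 * (Bfin (n / 2)).card * (Bfin (n / 2)).card else 0)
      = ∑ k ∈ (Finset.Ico 1 n).filter (fun k => 2 * k ≤ n),
        k * (Bfin k).card * (Bfin (n - k)).card := by
    by_cases hev : Even n
    · rw [if_pos hev]
      obtain ⟨m, hm⟩ := hev
      have hm2 : n / 2 = m := by omega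
      have hfil : (Finset.Ico 1 n).filter (fun k => 2 * k ≤ n)
          = insert m ((Finset.Ico 1 n).filter (fun k => 2 * k < n)) := by
        ext k
        simp only [Finset.mem_insert, Finset.mem_filter, Finset.mem_Ico]
        omega
      rw [hfil, Finset.sum_insert (by simp only [Finset.mem_filter, Finset.mem_Ico]; omega),
        hm2]
      have hnm : n - m = m := by omega
      rw [hnm]
      ring
    · rw [if_neg hev, add_zero]
      have : n % 2 = 1 := Nat.odd_iff.mp (Nat.not_even_iff_odd.mp hev)
      apply Finset.sum_congr ?_ (fun _ _ => rfl)
      ext k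
      simp only [Finset.mem_filter, Finset.mem_Ico]
      omega
  omega

lemma two_mul_choose_two (b : ℕ) : 2 * Nat.choose b 2 = b * (b - 1) := by
  induction b with
  | zero => rfl
  | succ m ih =>
    rw [Nat.choose_succ_succ, Nat.mul_add, ih, Nat.choose_one_right]
    cases m with
    | zero => rfl
    | succ k =>
      simp only [Nat.succ_sub_one]
      ring

lemma choose_two_int (b : ℕ) : (2 : ℤ) * (Nat.choose b 2 : ℤ) = (b : ℤ) * (b : ℤ) - b := by
  cases b with
  | zero => simp
  | succ m =>
    have h : 2 * Nat.choose (m + 1) 2 = (m + 1) * m := by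
      have := two_mul_choose_two (m + 1)
      simpa using this
    have h2 : ((2 * Nat.choose (m + 1) 2 : ℕ) : ℤ) = (((m + 1) * m : ℕ) : ℤ) := by
      exact_mod_cast congrArg (Nat.cast : ℕ → ℤ) h
    push_cast at h2 ⊢
    linear_combination h2

end StmtAux3
/-- the recurrences for `D_n = (1/2) Σ_T (S(T) - C(T))`. -/
theorem stmt_9 : ∀ n : ℕ, 1 < n →
    (Odd n → (Dnum n : ℤ) =
        (∑ k ∈ (Finset.range (n + 1)).filter (fun k => 1 ≤ k ∧ 2 * k ≤ n),
            (k : ℤ) * (bSh k : ℤ) * (bSh (n - k) : ℤ)) +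
        (∑ k ∈ Finset.Ico 1 n, (Dnum k : ℤ) * (bSh (n - k) : ℤ))) ∧
    (Even n → (Dnum n : ℤ) =
        (∑ k ∈ (Finset.range (n + 1)).filter (fun k => 1 ≤ k ∧ 2 * k ≤ n),
            (k : ℤ) * (bSh k : ℤ) * (bSh (n - k) : ℤ)) +
        (∑ k ∈ Finset.Ico 1 n, (Dnum k : ℤ) * (bSh (n - k) : ℤ)) -
        ((n / 2 : ℕ) : ℤ) * (Nat.choose (bSh (n / 2)) 2 : ℤ) +
        (Dnum (n / 2) : ℤ)) := by
  intro n hn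
  have hn2 : 2 ≤ n := hn
  constructor
  · intro hodd
    have hev : ¬ Even n := Nat.not_even_iff_odd.mpr hodd
    have hcomb := combined n hn2
    have hmin := minsplit n hn2
    rw [if_neg hev, add_zero] at hcomb hmin
    have h1 := congrArg (Nat.cast : ℕ → ℤ) hcomb
    have h2 := congrArg (Nat.cast : ℕ → ℤ) hmin
    push_cast at h1 h2
    simp only [bSh_eq]
    push_cast
    linarith [h1, h2]
  · intro hev
    obtain ⟨m, hm⟩ := hev
    have hev' : Even n := ⟨m, hm⟩
    have hm2 : n / 2 = m := by omega
    have hcomb := combined n hn2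
    have hmin := minsplit n hn2
    rw [if_pos hev', hm2] at hcomb hmin
    have h1 := congrArg (Nat.cast : ℕ → ℤ) hcomb
    have h2 := congrArg (Nat.cast : ℕ → ℤ) hmin
    have h3 := choose_two_int (bSh m)
    rw [bSh_eq] at h3
    push_cast at h1 h2
    simp only [hm2, bSh_eq]
    push_cast
    apply mul_left_cancel₀ (a := (2 : ℤ)) two_ne_zero
    linear_combination (-1 : ℤ) * h1 + h2 + (m : ℤ) * h3
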